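/- Let E, F be complex Banach spaces, P a multiple r-summing k-homogeneous polynomial and Q a multiple r-summing l-homogeneous polynomial on E (scalar-valued). Then the product PQ is multiple r-summing and ‖PQ‖_{M_r} ≤ ‖P‖_{M_r} · ‖Q‖_{M_r}. -/

import Mathlib

set_option maxHeartbeats 1000000


open scoped BigOperators

/-- The weak `ℓ_r` norm of a finite family `x : Fin m → E`:
`sup { (Σ_i |φ(x_i)|^r)^{1/r} : φ ∈ B_{E'} }`. -/
noncomputable def weakLrNorm {E : Type*} [NormedAddCommGroup E] [NormedSpace ℂ E]
    (r : ℝ) {m : ℕ} (x : Fin m → E) : ℝ :=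
  ⨆ φ : {φ : E →L[ℂ] ℂ // ‖φ‖ ≤ 1}, (∑ i, ‖φ.1 (x i)‖ ^ r) ^ (1 / r)

/-- `T` (the symmetric `n`-linear form of an `n`-homogeneous polynomial) is multiple
`r`-summing with constant `C`: for all finite families with weak `ℓ_r` norm at most `1`,
`(Σ_{i₁,…,i_n} |T(x₁^{i₁},…,x_n^{i_n})|^r)^{1/r} ≤ C`. -/
def IsMultipleSumming {E : Type*} [NormedAddCommGroup E] [NormedSpace ℂ E]
    (r C : ℝ) {n : ℕ} (T : ContinuousMultilinearMap ℂ (fun _ : Fin n => E) ℂ) : Prop :=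
  ∀ (m : Fin n → ℕ) (x : ∀ j, Fin (m j) → E),
    (∀ j, weakLrNorm r (x j) ≤ 1) →
    (∑ i : ∀ j, Fin (m j), ‖T (fun j => x j (i j))‖ ^ r) ^ (1 / r) ≤ C

open Finset Function in
private lemma prod_lemC {ι : Type*} [Fintype ι] [DecidableEq ι] (B : Finset ι) :
    ∑ S : Finset ι, (if B ⊆ S then ((-1 : ℂ) ^ Sᶜ.card) else 0)
      = if B = Finset.univ then 1 else 0 := by
  rw [← Fintype.sum_bijective compl (Function.Involutive.bijective compl_compl)
    (fun S : Finset ι => if S ⊆ Bᶜ then ((-1:ℂ) ^ S.card) else 0)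
    (fun S : Finset ι => if B ⊆ S then ((-1:ℂ) ^ Sᶜ.card) else 0) ?_]
  · have h2 : (∑ S : Finset ι, if S ⊆ Bᶜ then ((-1:ℂ)) ^ S.card else 0)
        = ((∑ m ∈ Bᶜ.powerset, ((-1:ℤ)) ^ m.card : ℤ) : ℂ) := by
      push_cast
      rw [← Finset.sum_filter]
      apply Finset.sum_congr _ (fun _ _ => rfl)
      ext S
      simp [Finset.mem_powerset]
    rw [h2, Finset.sum_powerset_neg_one_pow_card]
    by_cases h : B = Finset.univ
    · simp [h]
    · have hne : Bᶜ ≠ ∅ := by simp only [ne_eq, Finset.compl_eq_empty_iff]; exact h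
      simp [h, hne]
  · intro S
    have h1 : B ⊆ Sᶜ ↔ S ⊆ Bᶜ := Finset.subset_compl_comm.symm
    rw [compl_compl]
    simp only [h1]

open Finset Function in
private lemma prod_lemD {ι : Type*} [Fintype ι] [DecidableEq ι] (F : (ι → ι) → ℂ) :
    ∑ f : ι → ι, (if Function.Bijective f then F f else 0)
      = ∑ σ : Equiv.Perm ι, F ⇑σ := by
  classical
  rw [← Finset.sum_filter]
  symm
  refine Finset.sum_bij' (fun (σ : Equiv.Perm ι) (_ : σ ∈ (Finset.univ : Finset (Equiv.Perm ι))) => ⇑σ)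
    (fun f hf => Equiv.ofBijective f (by simpa using hf)) ?_ ?_ ?_ ?_ ?_
  · intro σ _; simp [Equiv.bijective]
  · intro f hf; exact Finset.mem_univ _
  · intro σ _; ext x; rfl
  · intro f hf; rfl
  · intro σ _; rfl

open Finset Function in
private lemma prod_lemK {n : ℕ} (G : (Fin n → Fin n) → ℂ) :
    ∑ S : Finset (Fin n), (-1 : ℂ) ^ Sᶜ.card *
        (∑ f : Fin n → Fin n, if (∀ j, f j ∈ S) then G f else 0)
      = ∑ σ : Equiv.Perm (Fin n), G ⇑σ := by
  simp_rw [Finset.mul_sum]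
  rw [Finset.sum_comm]
  have key : ∀ f : Fin n → Fin n,
      (∑ S : Finset (Fin n), (-1:ℂ) ^ Sᶜ.card * (if (∀ j, f j ∈ S) then G f else 0))
        = (if Function.Bijective f then G f else 0) := by
    intro f
    have h1 : ∀ S : Finset (Fin n), (-1:ℂ) ^ Sᶜ.card * (if (∀ j, f j ∈ S) then G f else 0)
        = (if Finset.image f Finset.univ ⊆ S then ((-1:ℂ) ^ Sᶜ.card) else 0) * G f := by
      intro S
      have : (∀ j, f j ∈ S) ↔ Finset.image f Finset.univ ⊆ S := by
        rw [Finset.image_subset_iff]; simp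
      rw [mul_ite, ite_mul, mul_comm, zero_mul, mul_zero]
      simp only [this]
    simp_rw [h1]
    rw [← Finset.sum_mul, prod_lemC]
    have h2 : Finset.image f Finset.univ = Finset.univ ↔ Function.Bijective f := by
      constructor
      · intro h
        have hs : Surjective f := fun y => by
          have : y ∈ Finset.image f Finset.univ := by rw [h]; exact Finset.mem_univ y
          simpa using this
        exact (Finite.surjective_iff_bijective).mp hs
      · intro h
        exact Finset.eq_univ_of_forall fun y => Finset.mem_image.mpr
          ⟨(h.2 y).choose, Finset.mem_univ _, (h.2 y).choose_spec⟩
    rw [if_congr h2 rfl rfl]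
    by_cases h : Function.Bijective f <;> simp [h]
  simp_rw [key]
  exact prod_lemD G

open Finset Function in
private lemma prod_lemE {E : Type*} [NormedAddCommGroup E] [NormedSpace ℂ E]
    {m p : ℕ} (T : ContinuousMultilinearMap ℂ (fun _ : Fin m => E) ℂ)
    (x : Fin p → E) (S : Finset (Fin p)) :
    T (fun _ => ∑ i ∈ S, x i)
      = ∑ f : Fin m → Fin p, if (∀ a, f a ∈ S) then T (x ∘ f) else 0 := by
  classical
  set y : Fin p → E := fun i => if i ∈ S then x i else 0 with hy
  have hsum : (∑ i ∈ S, x i) = ∑ i : Fin p, y i := by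
    rw [hy]
    simp only
    rw [Finset.sum_ite_mem, Finset.univ_inter]
  rw [hsum]
  have := T.toMultilinearMap.map_sum (α := fun _ : Fin m => Fin p)
    (g := fun _ j => y j)
  simp only [ContinuousMultilinearMap.coe_coe] at this
  rw [this]
  apply Finset.sum_congr rfl
  intro f _
  by_cases h : ∀ a, f a ∈ S
  · rw [if_pos h]
    congr 1
    funext a
    simp [hy, h a]
  · rw [if_neg h]
    push_neg at h
    obtain ⟨a, ha⟩ := h
    have : (fun a => y (f a)) a = 0 := by simp [hy, ha]
    exact T.map_coord_zero a this

open Finset Function in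
private lemma prod_lemF {E : Type*} [NormedAddCommGroup E] [NormedSpace ℂ E] {k l : ℕ}
    (P : ContinuousMultilinearMap ℂ (fun _ : Fin k => E) ℂ)
    (Q : ContinuousMultilinearMap ℂ (fun _ : Fin l => E) ℂ)
    (x : Fin (k + l) → E) (S : Finset (Fin (k + l))) :
    P (fun _ => ∑ i ∈ S, x i) * Q (fun _ => ∑ i ∈ S, x i)
      = ∑ h : Fin (k + l) → Fin (k + l),
          if (∀ j, h j ∈ S) then
            P (fun a => x (h (Fin.castAdd l a))) * Q (fun b => x (h (Fin.natAdd k b)))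
          else 0 := by
  classical
  rw [prod_lemE P x S, prod_lemE Q x S, Finset.sum_mul_sum]
  let e2 : (Fin (k + l) → Fin (k + l)) ≃
      ((Fin k → Fin (k + l)) × (Fin l → Fin (k + l))) :=
    (Equiv.arrowCongr finSumFinEquiv.symm (Equiv.refl _)).trans
      (Equiv.sumArrowEquivProdArrow _ _ _)
  have step1 : (∑ i : Fin k → Fin (k+l), ∑ j : Fin l → Fin (k+l),
      (if (∀ a, i a ∈ S) then P (x ∘ i) else 0) *
      (if (∀ b, j b ∈ S) then Q (x ∘ j) else 0))
      = ∑ p : (Fin k → Fin (k+l)) × (Fin l → Fin (k+l)),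
          (if (∀ a, p.1 a ∈ S) then P (x ∘ p.1) else 0) *
          (if (∀ b, p.2 b ∈ S) then Q (x ∘ p.2) else 0) :=
    (Fintype.sum_prod_type (f := fun p : (Fin k → Fin (k+l)) × (Fin l → Fin (k+l)) =>
      (if (∀ a, p.1 a ∈ S) then P (x ∘ p.1) else 0) *
      (if (∀ b, p.2 b ∈ S) then Q (x ∘ p.2) else 0))).symm
  rw [step1]
  rw [← Equiv.sum_comp e2 (fun p =>
    (if (∀ a, p.1 a ∈ S) then P (x ∘ p.1) else 0) *
    (if (∀ b, p.2 b ∈ S) then Q (x ∘ p.2) else 0))]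
  apply Finset.sum_congr rfl
  intro h _
  have h1 : (e2 h).1 = fun a => h (Fin.castAdd l a) := by
    funext a
    simp [e2, Equiv.sumArrowEquivProdArrow, Equiv.arrowCongr]
  have h2 : (e2 h).2 = fun b => h (Fin.natAdd k b) := by
    funext b
    simp [e2, Equiv.sumArrowEquivProdArrow, Equiv.arrowCongr]
  rw [h1, h2, ite_mul, mul_ite, mul_ite]
  simp only [zero_mul, mul_zero, ite_self]
  have hcond : ((∀ a, h (Fin.castAdd l a) ∈ S) ∧ (∀ b, h (Fin.natAdd k b) ∈ S))
      ↔ (∀ j, h j ∈ S) := by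
    constructor
    · rintro ⟨hA, hB⟩ j
      exact Fin.addCases hA hB j
    · intro hj; exact ⟨fun a => hj _, fun b => hj _⟩
  by_cases hA : ∀ a, h (Fin.castAdd l a) ∈ S
  · by_cases hB : ∀ b, h (Fin.natAdd k b) ∈ S
    · rw [if_pos hA, if_pos hB, if_pos (hcond.mp ⟨hA, hB⟩)]
      rfl
    · rw [if_pos hA, if_neg hB, if_neg (fun hj : (∀ j : Fin (k+l), h j ∈ S) => hB (fun b => hj (Fin.natAdd k b)))]
  · rw [if_neg hA, if_neg (fun hj : (∀ j : Fin (k+l), h j ∈ S) => hA (fun a => hj (Fin.castAdd l a)))]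

open Finset Function in
private lemma prod_lemM {E : Type*} [NormedAddCommGroup E] [NormedSpace ℂ E] {k l : ℕ}
    (P : ContinuousMultilinearMap ℂ (fun _ : Fin k => E) ℂ)
    (Q : ContinuousMultilinearMap ℂ (fun _ : Fin l => E) ℂ)
    (R : ContinuousMultilinearMap ℂ (fun _ : Fin (k + l) => E) ℂ)
    (hRsym : ∀ (σ : Equiv.Perm (Fin (k + l))) (x : Fin (k + l) → E), R (x ∘ σ) = R x)
    (hdiag : ∀ x : E, R (fun _ => x) = P (fun _ => x) * Q (fun _ => x))
    (x : Fin (k + l) → E) :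
    ((Nat.factorial (k + l)) : ℂ) * R x
      = ∑ σ : Equiv.Perm (Fin (k + l)),
          P (fun a => x (σ (Fin.castAdd l a))) * Q (fun b => x (σ (Fin.natAdd k b))) := by
  classical
  have hL : ∑ S : Finset (Fin (k + l)), (-1 : ℂ) ^ Sᶜ.card * R (fun _ => ∑ i ∈ S, x i)
      = (Nat.factorial (k + l) : ℂ) * R x := by
    calc ∑ S : Finset (Fin (k + l)), (-1 : ℂ) ^ Sᶜ.card * R (fun _ => ∑ i ∈ S, x i)
        = ∑ S : Finset (Fin (k + l)), (-1 : ℂ) ^ Sᶜ.card *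
            (∑ f : Fin (k+l) → Fin (k+l), if (∀ j, f j ∈ S) then R (x ∘ f) else 0) := by
          refine Finset.sum_congr rfl fun S _ => ?_
          rw [prod_lemE R x S]
      _ = ∑ σ : Equiv.Perm (Fin (k + l)), R (x ∘ ⇑σ) := prod_lemK _
      _ = ((Nat.factorial (k + l)) : ℂ) * R x := by
          simp only [hRsym]
          rw [Finset.sum_const, Finset.card_univ, Fintype.card_perm, nsmul_eq_mul, Fintype.card_fin]
  have hR' : ∑ S : Finset (Fin (k + l)), (-1 : ℂ) ^ Sᶜ.card * R (fun _ => ∑ i ∈ S, x i)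
      = ∑ σ : Equiv.Perm (Fin (k + l)),
          P (fun a => x (σ (Fin.castAdd l a))) * Q (fun b => x (σ (Fin.natAdd k b))) := by
    calc ∑ S : Finset (Fin (k + l)), (-1 : ℂ) ^ Sᶜ.card * R (fun _ => ∑ i ∈ S, x i)
        = ∑ S : Finset (Fin (k + l)), (-1 : ℂ) ^ Sᶜ.card *
            (∑ h : Fin (k+l) → Fin (k+l), if (∀ j, h j ∈ S) then
              P (fun a => x (h (Fin.castAdd l a))) * Q (fun b => x (h (Fin.natAdd k b))) else 0) := by
          refine Finset.sum_congr rfl fun S _ => ?_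
          rw [hdiag (∑ i ∈ S, x i), prod_lemF P Q x S]
      _ = ∑ σ : Equiv.Perm (Fin (k + l)),
            P (fun a => x (σ (Fin.castAdd l a))) * Q (fun b => x (σ (Fin.natAdd k b))) := prod_lemK _
  rw [← hL, hR']

open Finset Function Real in
private lemma prod_lp_sum_le {α ι : Type*} [Fintype ι] (s : Finset α) (F : α → ι → ℝ)
    (hF : ∀ a i, 0 ≤ F a i) {p : ℝ} (hp : 1 ≤ p) :
    (∑ i : ι, (∑ a ∈ s, F a i) ^ p) ^ (1/p) ≤ ∑ a ∈ s, (∑ i : ι, (F a i) ^ p) ^ (1/p) := by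
  classical
  have hp0 : p ≠ 0 := by positivity
  induction s using Finset.induction with
  | empty => simp [Real.zero_rpow hp0, Real.zero_rpow (inv_ne_zero hp0)]
  | @insert a s ha ih =>
    rw [Finset.sum_insert ha]
    have step : (∑ i : ι, (F a i + ∑ b ∈ s, F b i) ^ p) ^ (1/p)
        ≤ (∑ i : ι, (F a i) ^ p) ^ (1/p) + (∑ i : ι, (∑ b ∈ s, F b i) ^ p) ^ (1/p) := by
      have := Real.Lp_add_le (s := Finset.univ) (f := fun i => F a i)
        (g := fun i => ∑ b ∈ s, F b i) hp
      simpa [abs_of_nonneg (hF a _), abs_of_nonneg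
        (Finset.sum_nonneg fun b _ => hF b _),
        abs_of_nonneg (add_nonneg (hF a _) (Finset.sum_nonneg fun b _ => hF b _))] using this
    calc (∑ i : ι, (∑ b ∈ insert a s, F b i) ^ p) ^ (1/p)
        = (∑ i : ι, (F a i + ∑ b ∈ s, F b i) ^ p) ^ (1/p) := by
          simp_rw [Finset.sum_insert ha]
      _ ≤ (∑ i : ι, (F a i) ^ p) ^ (1/p) + (∑ i : ι, (∑ b ∈ s, F b i) ^ p) ^ (1/p) := step
      _ ≤ (∑ i : ι, (F a i) ^ p) ^ (1/p) + ∑ b ∈ s, (∑ i : ι, (F b i) ^ p) ^ (1/p) := by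
          gcongr

/-- If `P` is a multiple `r`-summing `k`-homogeneous polynomial and `Q` a multiple `r`-summing
`l`-homogeneous polynomial on a complex Banach space `E`, then the product `PQ` (whose
symmetric multilinear form is `R`) is multiple `r`-summing with
`‖PQ‖_{M_r} ≤ ‖P‖_{M_r} ‖Q‖_{M_r}`. -/
theorem stmt_7 {E : Type*} [NormedAddCommGroup E] [NormedSpace ℂ E] [CompleteSpace E]
    {k l : ℕ} (r : ℝ) (hr : 1 ≤ r)
    (P : ContinuousMultilinearMap ℂ (fun _ : Fin k => E) ℂ)
    (Q : ContinuousMultilinearMap ℂ (fun _ : Fin l => E) ℂ)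
    (R : ContinuousMultilinearMap ℂ (fun _ : Fin (k + l) => E) ℂ)
    (hPsym : ∀ (σ : Equiv.Perm (Fin k)) (x : Fin k → E), P (x ∘ σ) = P x)
    (hQsym : ∀ (σ : Equiv.Perm (Fin l)) (x : Fin l → E), Q (x ∘ σ) = Q x)
    (hRsym : ∀ (σ : Equiv.Perm (Fin (k + l))) (x : Fin (k + l) → E), R (x ∘ σ) = R x)
    (hdiag : ∀ x : E, R (fun _ => x) = P (fun _ => x) * Q (fun _ => x))
    (CP CQ : ℝ) (hCP : 0 ≤ CP) (hCQ : 0 ≤ CQ)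
    (hP : IsMultipleSumming r CP P) (hQ : IsMultipleSumming r CQ Q) :
    IsMultipleSumming r (CP * CQ) R := by
  classical
  intro m x hx
  have hr0 : (0:ℝ) < r := lt_of_lt_of_le zero_lt_one hr
  have hfacpos : (0:ℝ) < (Nat.factorial (k+l) : ℝ) := by positivity
  have hfne : ((Nat.factorial (k+l) : ℂ)) ≠ 0 := Nat.cast_ne_zero.mpr (Nat.factorial_ne_zero _)
  set N : ℝ := (Nat.factorial (k+l) : ℝ) with hN
  let c : Equiv.Perm (Fin (k+l)) → (∀ j : Fin (k+l), Fin (m j)) → ℂ := fun σ i =>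
    P (fun a => x (σ (Fin.castAdd l a)) (i (σ (Fin.castAdd l a)))) *
    Q (fun b => x (σ (Fin.natAdd k b)) (i (σ (Fin.natAdd k b))))
  have hRval : ∀ i : ∀ j : Fin (k+l), Fin (m j),
      R (fun j => x j (i j)) = ((Nat.factorial (k+l) : ℂ))⁻¹ * ∑ σ, c σ i := by
    intro i
    have h := prod_lemM P Q R hRsym hdiag (fun j => x j (i j))
    rw [← h, inv_mul_cancel_left₀ hfne]
  have hbound : ∀ i : ∀ j : Fin (k+l), Fin (m j),
      ‖R (fun j => x j (i j))‖ ≤ N⁻¹ * ∑ σ, ‖c σ i‖ := by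
    intro i
    rw [hRval i, norm_mul, norm_inv]
    have : ‖((Nat.factorial (k+l) : ℂ))‖ = N := by
      rw [hN]; simp
    rw [this]
    gcongr
    exact norm_sum_le _ _
  -- per-σ bound
  have hσ : ∀ σ : Equiv.Perm (Fin (k+l)),
      (∑ i : ∀ j : Fin (k+l), Fin (m j), ‖c σ i‖ ^ r) ^ (1/r) ≤ CP * CQ := by
    intro σ
    set mP : Fin k → ℕ := fun a => m (σ (Fin.castAdd l a)) with hmP
    set mQ : Fin l → ℕ := fun b => m (σ (Fin.natAdd k b)) with hmQ
    set gP : (∀ a : Fin k, Fin (mP a)) → ℝ :=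
      fun u => ‖P (fun a => x (σ (Fin.castAdd l a)) (u a))‖ ^ r with hgP
    set gQ : (∀ b : Fin l, Fin (mQ b)) → ℝ :=
      fun v => ‖Q (fun b => x (σ (Fin.natAdd k b)) (v b))‖ ^ r with hgQ
    have hPsum : ∑ u, gP u ≤ CP ^ r := by
      have h := hP mP (fun a => x (σ (Fin.castAdd l a))) (fun a => hx _)
      have hnn : 0 ≤ ∑ u, gP u :=
        Finset.sum_nonneg fun u _ => Real.rpow_nonneg (norm_nonneg _) r
      calc ∑ u, gP u = ((∑ u, gP u) ^ (1/r)) ^ r := by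
            rw [← Real.rpow_mul hnn, one_div, inv_mul_cancel₀ (ne_of_gt hr0), Real.rpow_one]
        _ ≤ CP ^ r := Real.rpow_le_rpow (Real.rpow_nonneg hnn _) h hr0.le
    have hQsum : ∑ v, gQ v ≤ CQ ^ r := by
      have h := hQ mQ (fun b => x (σ (Fin.natAdd k b))) (fun b => hx _)
      have hnn : 0 ≤ ∑ v, gQ v :=
        Finset.sum_nonneg fun v _ => Real.rpow_nonneg (norm_nonneg _) r
      calc ∑ v, gQ v = ((∑ v, gQ v) ^ (1/r)) ^ r := by
            rw [← Real.rpow_mul hnn, one_div, inv_mul_cancel₀ (ne_of_gt hr0), Real.rpow_one]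
        _ ≤ CQ ^ r := Real.rpow_le_rpow (Real.rpow_nonneg hnn _) h hr0.le
    have hfact : ∑ i : ∀ j : Fin (k+l), Fin (m j), ‖c σ i‖ ^ r
        = (∑ u, gP u) * (∑ v, gQ v) := by
      let Eq1 : (∀ j : Fin (k+l), Fin (m j)) ≃
          ((∀ a : Fin k, Fin (mP a)) × (∀ b : Fin l, Fin (mQ b))) :=
        (Equiv.piCongrLeft' (fun j => Fin (m j)) σ.symm).trans
          ((Equiv.piCongrLeft' (fun j => Fin (m (σ j))) finSumFinEquiv.symm).trans
            (Equiv.sumPiEquivProdPi fun s => Fin (m (σ (finSumFinEquiv s)))))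
      have hcomp := Equiv.sum_comp Eq1 (fun p => gP p.1 * gQ p.2)
      calc ∑ i : ∀ j : Fin (k+l), Fin (m j), ‖c σ i‖ ^ r
          = ∑ i : ∀ j : Fin (k+l), Fin (m j),
              gP (fun a => i (σ (Fin.castAdd l a))) * gQ (fun b => i (σ (Fin.natAdd k b))) := by
            refine Finset.sum_congr rfl fun i _ => ?_
            simp only [c, hgP, hgQ, norm_mul]
            rw [Real.mul_rpow (norm_nonneg _) (norm_nonneg _)]
        _ = ∑ p : (∀ a : Fin k, Fin (mP a)) × (∀ b : Fin l, Fin (mQ b)), gP p.1 * gQ p.2 := by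
            rw [← hcomp]
            rfl
        _ = ∑ u, ∑ v, gP u * gQ v := Fintype.sum_prod_type _
        _ = (∑ u, gP u) * (∑ v, gQ v) := (Finset.sum_mul_sum _ _ _ _).symm
    rw [hfact]
    have h1 : (∑ u, gP u) * (∑ v, gQ v) ≤ CP ^ r * CQ ^ r := by
      apply mul_le_mul hPsum hQsum
        (Finset.sum_nonneg fun v _ => Real.rpow_nonneg (norm_nonneg _) r)
        (Real.rpow_nonneg hCP r)
    calc ((∑ u, gP u) * (∑ v, gQ v)) ^ (1/r)
        ≤ (CP ^ r * CQ ^ r) ^ (1/r) := by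
          apply Real.rpow_le_rpow _ h1 (by positivity)
          exact mul_nonneg (Finset.sum_nonneg fun u _ => Real.rpow_nonneg (norm_nonneg _) r)
            (Finset.sum_nonneg fun v _ => Real.rpow_nonneg (norm_nonneg _) r)
      _ = CP * CQ := by
          rw [← Real.mul_rpow hCP hCQ, ← Real.rpow_mul (mul_nonneg hCP hCQ),
            mul_one_div, div_self (ne_of_gt hr0), Real.rpow_one]
  -- main chain
  calc (∑ i : ∀ j : Fin (k+l), Fin (m j), ‖R (fun j => x j (i j))‖ ^ r) ^ (1/r)
      ≤ (∑ i : ∀ j : Fin (k+l), Fin (m j), (N⁻¹ * ∑ σ, ‖c σ i‖) ^ r) ^ (1/r) := by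
        apply Real.rpow_le_rpow
          (Finset.sum_nonneg fun i _ => Real.rpow_nonneg (norm_nonneg _) r)
          (Finset.sum_le_sum fun i _ =>
            Real.rpow_le_rpow (norm_nonneg _) (hbound i) hr0.le) (by positivity)
    _ = N⁻¹ * (∑ i : ∀ j : Fin (k+l), Fin (m j), (∑ σ, ‖c σ i‖) ^ r) ^ (1/r) := by
        have hNinv : (0:ℝ) ≤ N⁻¹ := inv_nonneg.mpr hfacpos.le
        have hrw : ∀ i : ∀ j : Fin (k+l), Fin (m j),
            (N⁻¹ * ∑ σ, ‖c σ i‖) ^ r = N⁻¹ ^ r * (∑ σ, ‖c σ i‖) ^ r := fun i =>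
          Real.mul_rpow hNinv (Finset.sum_nonneg fun σ _ => norm_nonneg _)
        simp_rw [hrw]
        rw [← Finset.mul_sum,
          Real.mul_rpow (Real.rpow_nonneg hNinv r)
            (Finset.sum_nonneg fun i _ => Real.rpow_nonneg
              (Finset.sum_nonneg fun σ _ => norm_nonneg _) r),
          ← Real.rpow_mul hNinv, mul_one_div, div_self (ne_of_gt hr0), Real.rpow_one]
    _ ≤ N⁻¹ * ∑ σ : Equiv.Perm (Fin (k+l)),
          (∑ i : ∀ j : Fin (k+l), Fin (m j), ‖c σ i‖ ^ r) ^ (1/r) := by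
        gcongr
        exact prod_lp_sum_le Finset.univ (fun σ i => ‖c σ i‖) (fun _ _ => norm_nonneg _) hr
    _ ≤ N⁻¹ * ∑ _σ : Equiv.Perm (Fin (k+l)), (CP * CQ) := by
        gcongr with σ _
        exact hσ σ
    _ = CP * CQ := by
        rw [Finset.sum_const, Finset.card_univ, Fintype.card_perm, Fintype.card_fin,
          nsmul_eq_mul, ← mul_assoc, hN, inv_mul_cancel₀ (ne_of_gt hfacpos), one_mul]
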